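/- Let k, N ∈ ℕ with 1 ≤ k < N, let U ⊂ ℝ^N be a k-dimensional linear subspace, and let K ⊂ U be a bounded set. Then there exist an (N−1)-dimensional rational linear subspace Q ⊂ ℝ^N and a vector b ∈ ℝ^N such that π(K) ∩ π(Q + b) = ∅, where π : ℝ^N → 𝕋^N = ℝ^N/ℤ^N is the canonical projection. -/

import Mathlib

open Module Set

noncomputable section

/-- The integer lattice `ℤ^N` as an additive subgroup of `ℝ^N`. -/
def intLat (N : ℕ) : AddSubgroup (Fin N → ℝ) :=
  AddSubgroup.pi Set.univ fun _ => AddSubgroup.zmultiples (1 : ℝ)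

/-- The torus `𝕋^N = ℝ^N / ℤ^N`. -/
abbrev Torus (N : ℕ) := (Fin N → ℝ) ⧸ intLat N

/-- A subspace of `ℝ^N` is rational if it is spanned by vectors with rational
coordinates. -/
def IsRationalSubspace {N : ℕ} (Q : Submodule ℝ (Fin N → ℝ)) : Prop :=
  ∃ S : Set (Fin N → ℚ),
    Q = Submodule.span ℝ ((fun v : Fin N → ℚ => fun i => (v i : ℝ)) '' S)

/-- Minkowski step: any convex symmetric set of infinite volume contains a nonzero
integer point. -/
theorem aux_minkowski {N : ℕ} (s : Set (Fin N → ℝ)) (h_symm : ∀ x ∈ s, -x ∈ s)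
    (h_conv : Convex ℝ s) (hvol : MeasureTheory.volume s = ⊤) :
    ∃ a : Fin N → ℝ, a ≠ 0 ∧ a ∈ s ∧
      a ∈ Submodule.span ℤ (Set.range (Pi.basisFun ℝ (Fin N))) := by
  haveI : Countable (Submodule.span ℤ (Set.range (Pi.basisFun ℝ (Fin N)))).toAddSubgroup :=
    inferInstanceAs (Countable (Submodule.span ℤ (Set.range ⇑(Pi.basisFun ℝ (Fin N)))))
  have fund := ZSpan.isAddFundamentalDomain' (Pi.basisFun ℝ (Fin N)) MeasureTheory.volume
  have hF : MeasureTheory.volume (ZSpan.fundamentalDomain (Pi.basisFun ℝ (Fin N))) ≠ ⊤ :=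
    ((ZSpan.fundamentalDomain_isBounded _).measure_lt_top).ne
  have h : MeasureTheory.volume (ZSpan.fundamentalDomain (Pi.basisFun ℝ (Fin N)))
      * 2 ^ finrank ℝ (Fin N → ℝ) < MeasureTheory.volume s := by
    rw [hvol]
    exact (ENNReal.mul_ne_top hF (by simp)).lt_top
  obtain ⟨x, hx0, hxs⟩ :=
    MeasureTheory.exists_ne_zero_mem_lattice_of_measure_mul_two_pow_lt_measure
      fund h_symm h_conv h
  exact ⟨x, by simpa using hx0, hxs, x.2⟩

/-- Elements of `span ℤ` of the standard basis have integer coordinates. -/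
theorem aux_int_coords {N : ℕ} {a : Fin N → ℝ}
    (ha : a ∈ Submodule.span ℤ (Set.range (Pi.basisFun ℝ (Fin N)))) :
    ∀ i, ∃ z : ℤ, (z : ℝ) = a i := by
  induction ha using Submodule.span_induction with
  | mem x hx =>
    obtain ⟨j, rfl⟩ := hx
    intro i
    refine ⟨if i = j then 1 else 0, ?_⟩
    simp [Pi.basisFun_apply, Pi.single_apply]
  | zero => intro i; exact ⟨0, by simp⟩
  | add x y _ _ hx hy =>
    intro i
    obtain ⟨z1, h1⟩ := hx i
    obtain ⟨z2, h2⟩ := hy i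
    exact ⟨z1 + z2, by push_cast; simp [← h1, ← h2]⟩
  | smul c x _ hx =>
    intro i
    obtain ⟨z, h⟩ := hx i
    exact ⟨c * z, by push_cast; simp [← h]⟩

/-- The kernel of an integer-coefficient functional is a rational subspace. -/
theorem aux_ker_rational {N : ℕ} (a : Fin N → ℝ) (A : Fin N → ℤ)
    (hA : ∀ i, (A i : ℝ) = a i) (i0 : Fin N) (hai0 : a i0 ≠ 0)
    (φ : (Fin N → ℝ) →ₗ[ℝ] ℝ) (hφ : ∀ x, φ x = ∑ i, a i * x i) :
    ∃ S : Set (Fin N → ℚ),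
      LinearMap.ker φ
        = Submodule.span ℝ ((fun v : Fin N → ℚ => fun i => (v i : ℝ)) '' S) := by
  classical
  set W : Fin N → (Fin N → ℚ) :=
    fun i => fun j => if j = i then 1 else if j = i0 then -(A i : ℚ)/(A i0) else 0 with hW
  refine ⟨W '' {i | i ≠ i0}, ?_⟩
  set cst : (Fin N → ℚ) → (Fin N → ℝ) := fun v => fun i => (v i : ℝ) with hcst
  have hcastW : ∀ i : Fin N, i ≠ i0 → cst (W i)
      = Pi.single i (1:ℝ) + (-(a i)/(a i0)) • (Pi.single i0 1 : Fin N → ℝ) := by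
    intro i hi
    funext j
    simp only [hcst, hW, Pi.add_apply, Pi.smul_apply, Pi.single_apply, smul_eq_mul]
    split_ifs with h1 h2
    · exact absurd (h1.symm.trans h2) hi
    · push_cast; ring
    · push_cast [hA]; ring
    · push_cast; ring
  have hsingle : ∀ i : Fin N, φ (Pi.single i 1) = a i := by
    intro i
    rw [hφ]
    simp [Pi.single_apply, mul_ite, Finset.sum_ite_eq]
  have hker : ∀ i : Fin N, i ≠ i0 → cst (W i) ∈ LinearMap.ker φ := by
    intro i hi
    rw [LinearMap.mem_ker, hcastW i hi, map_add, map_smul, hsingle, hsingle, smul_eq_mul]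
    field_simp
    ring
  apply le_antisymm
  · intro x hx
    have hx0 : ∑ i, a i * x i = 0 := by rw [← hφ x]; exact hx
    have hsingle_smul : ∀ (i : Fin N) (c : ℝ),
        c • (Pi.single i 1 : Fin N → ℝ) = Pi.single i c := by
      intro i c
      funext j
      simp [Pi.single_apply, mul_ite]
    have h4 : ∑ i ∈ Finset.univ.erase i0, a i * x i = -(a i0 * x i0) := by
      rw [Finset.sum_erase_eq_sub (f := fun i => a i * x i) (Finset.mem_univ i0), hx0]
      ring
    have hscal : ∑ i ∈ Finset.univ.erase i0, x i * (-(a i)/(a i0)) = x i0 := by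
      calc ∑ i ∈ Finset.univ.erase i0, x i * (-(a i)/(a i0))
          = ∑ i ∈ Finset.univ.erase i0, (-(a i * x i)) / a i0 := by
            apply Finset.sum_congr rfl; intros; ring
        _ = (∑ i ∈ Finset.univ.erase i0, -(a i * x i)) / a i0 := by
            rw [Finset.sum_div]
        _ = (-(∑ i ∈ Finset.univ.erase i0, a i * x i)) / a i0 := by
            rw [Finset.sum_neg_distrib]
        _ = x i0 := by rw [h4]; field_simp
    have hxdec : x = ∑ i ∈ Finset.univ.erase i0, x i • cst (W i) := by
      have h6 : ∑ i ∈ Finset.univ.erase i0, x i • cst (W i)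
          = (∑ i ∈ Finset.univ.erase i0, Pi.single i (x i))
            + (∑ i ∈ Finset.univ.erase i0, x i * (-(a i)/(a i0)))
              • (Pi.single i0 1 : Fin N → ℝ) := by
        rw [Finset.sum_smul, ← Finset.sum_add_distrib]
        apply Finset.sum_congr rfl
        intro i hi
        rw [hcastW i (Finset.mem_erase.mp hi).1, smul_add, smul_smul, hsingle_smul]
      rw [h6, hscal, hsingle_smul]
      have h7 : ∑ i ∈ Finset.univ.erase i0, Pi.single i (x i)
          = (∑ i, Pi.single i (x i)) - Pi.single i0 (x i0) :=
        Finset.sum_erase_eq_sub (Finset.mem_univ i0)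
      rw [h7, Finset.univ_sum_single]
      abel
    rw [hxdec]
    apply Submodule.sum_mem
    intro i hi
    apply Submodule.smul_mem
    apply Submodule.subset_span
    exact ⟨W i, ⟨i, (Finset.mem_erase.mp hi).1, rfl⟩, rfl⟩
  · rw [Submodule.span_le]
    rintro _ ⟨v, ⟨i, hi, rfl⟩, rfl⟩
    exact hker i hi

set_option maxHeartbeats 1000000 in
set_option synthInstance.maxHeartbeats 400000 in
/-- For `1 ≤ k < N`, a `k`-dimensional subspace `U ⊆ ℝ^N` and a bounded set `K ⊆ U`,
there are an `(N-1)`-dimensional rational subspace `Q` and a vector `b` such that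
`π(K)` and `π(Q + b)` are disjoint in the torus `𝕋^N`. -/
theorem exists_rational_hyperplane_coset_avoiding_window
    {k N : ℕ} (hk : 1 ≤ k) (hkN : k < N)
    (U : Submodule ℝ (Fin N → ℝ)) (hU : finrank ℝ U = k)
    (K : Set (Fin N → ℝ)) (hKU : K ⊆ (U : Set (Fin N → ℝ)))
    (hK : Bornology.IsBounded K) :
    ∃ Q : Submodule ℝ (Fin N → ℝ), IsRationalSubspace Q ∧ finrank ℝ Q = N - 1 ∧
      ∃ b : Fin N → ℝ,
        (QuotientAddGroup.mk' (intLat N) '' K) ∩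
          (QuotientAddGroup.mk' (intLat N) ''
            ((fun q => q + b) '' (Q : Set (Fin N → ℝ)))) = ∅ := by
  classical
  have hN : 0 < N := by omega
  -- a bound on `K`
  obtain ⟨R0, hR0⟩ := isBounded_iff_forall_norm_le.mp hK
  set R : ℝ := max R0 0 with hRdef
  have hR : ∀ u ∈ K, ‖u‖ ≤ R := fun u hu => (hR0 u hu).trans (le_max_left _ _)
  have hRpos : (0:ℝ) ≤ R := le_max_right _ _
  -- a nonzero vector `w` with `∑ i, w i * u i = 0` for all `u ∈ U`
  obtain ⟨w, hw0, hwU⟩ :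
      ∃ w : Fin N → ℝ, w ≠ 0 ∧ ∀ u ∈ U, ∑ i, w i * u i = 0 := by
    have hUt : U ≠ ⊤ := by
      intro h
      rw [h, finrank_top, Module.finrank_pi] at hU
      simp at hU
      omega
    obtain ⟨x, hx⟩ : ∃ x, x ∉ U := by
      by_contra h
      push_neg at h
      exact hUt (Submodule.eq_top_iff'.mpr h)
    have hy : (U.mkQ x) ≠ 0 := by
      rw [ne_eq, Submodule.mkQ_apply, Submodule.Quotient.mk_eq_zero]
      exact hx
    obtain ⟨g, hg⟩ : ∃ g : Module.Dual ℝ ((Fin N → ℝ) ⧸ U), g (U.mkQ x) ≠ 0 := by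
      by_contra h
      push_neg at h
      exact hy ((Module.forall_dual_apply_eq_zero_iff ℝ _).mp h)
    set f : (Fin N → ℝ) →ₗ[ℝ] ℝ := g.comp U.mkQ with hf
    have hfU : ∀ u ∈ U, f u = 0 := by
      intro u hu
      show g (U.mkQ u) = 0
      rw [show U.mkQ u = 0 by rwa [Submodule.mkQ_apply, Submodule.Quotient.mk_eq_zero]]
      exact map_zero g
    set w : Fin N → ℝ := fun i => f (fun j => if i = j then 1 else 0) with hw
    have hfw : ∀ v : Fin N → ℝ, f v = ∑ i, v i * w i := by
      intro v
      conv_lhs => rw [pi_eq_sum_univ v]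
      rw [map_sum]
      apply Finset.sum_congr rfl
      intro i _
      rw [f.map_smul]
      simp [hw, mul_comm]
    refine ⟨w, ?_, ?_⟩
    · intro h
      apply hg
      have h2 := hfw x
      rw [h] at h2
      simpa [hf] using h2
    · intro u hu
      have h3 := hfU u hu
      rw [hfw] at h3
      calc ∑ i, w i * u i = ∑ i, u i * w i := by
            apply Finset.sum_congr rfl; intros; ring
        _ = 0 := h3
  set w1 : Fin N → ℝ := ‖w‖⁻¹ • w with hw1def
  have hw1 : ‖w1‖ = 1 := norm_smul_inv_norm hw0
  have hw1U : ∀ u ∈ K, ∑ i, w1 i * u i = 0 := by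
    intro u hu
    have h1 := hwU u (hKU hu)
    calc ∑ i, w1 i * u i = ‖w‖⁻¹ * ∑ i, w i * u i := by
          rw [Finset.mul_sum]
          apply Finset.sum_congr rfl
          intro i _
          simp [hw1def, mul_assoc]
      _ = 0 := by rw [h1, mul_zero]
  -- the slab
  set s : Set (Fin N → ℝ) := {x : Fin N → ℝ | ∀ u ∈ K, |∑ i, x i * u i| < 1/2} with hsdef
  have h_symm : ∀ x ∈ s, -x ∈ s := by
    intro x hx u hu
    have := hx u hu
    have heq : ∑ i, (-x) i * u i = -∑ i, x i * u i := by
      rw [← Finset.sum_neg_distrib]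
      apply Finset.sum_congr rfl
      intro i _
      simp only [Pi.neg_apply]
      ring
    rw [Set.mem_setOf_eq] at *
    rw [heq, abs_neg]
    exact this
  have h_conv : Convex ℝ s := by
    intro x hx y hy a b ha hb hab u hu
    have Hx := hx u hu
    have Hy := hy u hu
    have hsum : ∑ i, (a • x + b • y) i * u i
        = a * (∑ i, x i * u i) + b * (∑ i, y i * u i) := by
      simp only [Pi.add_apply, Pi.smul_apply, smul_eq_mul, Finset.mul_sum,
        ← Finset.sum_add_distrib]
      apply Finset.sum_congr rfl
      intro i _
      ring
    rw [hsum]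
    have habs : |a * (∑ i, x i * u i) + b * (∑ i, y i * u i)|
        ≤ a * |∑ i, x i * u i| + b * |∑ i, y i * u i| := by
      refine (abs_add_le _ _).trans ?_
      rw [abs_mul, abs_mul, abs_of_nonneg ha, abs_of_nonneg hb]
    rcases eq_or_lt_of_le ha with h | h
    · have hb1 : b = 1 := by linarith
      rw [← h, hb1] at habs
      simpa [← h, hb1] using lt_of_le_of_lt habs (by simpa using Hy)
    · have h1 : a * |∑ i, x i * u i| < a * (1/2) := mul_lt_mul_of_pos_left Hx h
      have h2 : b * |∑ i, y i * u i| ≤ b * (1/2) :=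
        mul_le_mul_of_nonneg_left Hy.le hb
      refine lt_of_le_of_lt habs ?_
      nlinarith
  -- the slab has infinite volume
  set δ : ℝ := 1 / (4 * N * (R + 1)) with hδdef
  have hδpos : 0 < δ := by
    rw [hδdef]
    positivity
  have hNR : (1:ℝ) ≤ N := by exact_mod_cast hN
  have hδ4 : δ ≤ 1/4 := by
    rw [hδdef]
    rw [div_le_div_iff₀ (by positivity) (by norm_num)]
    nlinarith
  have hsub : ∀ n : ℕ, Metric.ball ((n : ℝ) • w1) δ ⊆ s := by
    intro n x hx
    intro u hu
    have hdist : ‖x - (n : ℝ) • w1‖ < δ := by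
      rw [← dist_eq_norm]
      exact Metric.mem_ball.mp hx
    have heq : ∑ i, x i * u i = ∑ i, (x - (n : ℝ) • w1) i * u i := by
      have h1 : ∑ i, x i * u i
          = ∑ i, ((x - (n : ℝ) • w1) i * u i + (n : ℝ) * (w1 i * u i)) := by
        apply Finset.sum_congr rfl
        intro i _
        simp only [Pi.sub_apply, Pi.smul_apply, smul_eq_mul]
        ring
      rw [h1, Finset.sum_add_distrib, ← Finset.mul_sum, hw1U u hu, mul_zero, add_zero]
    show |∑ i, x i * u i| < 1/2
    rw [heq]
    have hbound : |∑ i, (x - (n : ℝ) • w1) i * u i|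
        ≤ ∑ i : Fin N, ‖x - (n : ℝ) • w1‖ * R := by
      refine (Finset.abs_sum_le_sum_abs _ _).trans ?_
      apply Finset.sum_le_sum
      intro i _
      rw [abs_mul]
      have h2 : |(x - (n : ℝ) • w1) i| ≤ ‖x - (n : ℝ) • w1‖ := by
        simpa using norm_le_pi_norm (x - (n : ℝ) • w1) i
      have h3 : |u i| ≤ R := by
        refine le_trans ?_ (hR u hu)
        simpa using norm_le_pi_norm u i
      exact mul_le_mul h2 h3 (abs_nonneg _) (norm_nonneg _)
    rw [Finset.sum_const, Finset.card_univ, Fintype.card_fin, nsmul_eq_mul] at hbound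
    refine lt_of_le_of_lt hbound ?_
    have hnorm0 : (0:ℝ) ≤ ‖x - (n : ℝ) • w1‖ := norm_nonneg _
    have hδeq : δ * (4 * N * (R + 1)) = 1 := by
      rw [hδdef]
      field_simp
    nlinarith [mul_le_mul_of_nonneg_left hdist.le (by positivity : (0:ℝ) ≤ (N:ℝ) * R)]
  have hvol : MeasureTheory.volume s = ⊤ := by
    have hdisj : Pairwise (Function.onFun Disjoint
        (fun n : ℕ => Metric.ball ((n : ℝ) • w1) δ)) := by
      intro n m hnm
      refine Metric.ball_disjoint_ball ?_
      have hd : dist ((n : ℝ) • w1) ((m : ℝ) • w1) = |(n : ℝ) - m| := by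
        rw [dist_eq_norm, ← sub_smul, norm_smul, hw1, mul_one, Real.norm_eq_abs]
      rw [hd]
      have h1 : (1 : ℝ) ≤ |(n : ℝ) - m| := by
        have h2 : ((n : ℤ) - m) ≠ 0 := sub_ne_zero.mpr (by exact_mod_cast hnm)
        have h3 := Int.one_le_abs h2
        calc (1:ℝ) ≤ |((n:ℤ) - m : ℤ)| := by exact_mod_cast h3
          _ = |(n : ℝ) - m| := by push_cast; ring_nf
      linarith
    have hle : MeasureTheory.volume (⋃ n : ℕ, Metric.ball ((n : ℝ) • w1) δ)
        ≤ MeasureTheory.volume s := MeasureTheory.measure_mono (Set.iUnion_subset hsub)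
    rw [MeasureTheory.measure_iUnion hdisj (fun n => measurableSet_ball)] at hle
    have hball : ∀ n : ℕ, MeasureTheory.volume (Metric.ball ((n : ℝ) • w1) δ)
        = MeasureTheory.volume (Metric.ball (0 : Fin N → ℝ) δ) := by
      intro n
      have h5 := MeasureTheory.measure_vadd MeasureTheory.volume ((n : ℝ) • w1)
        (Metric.ball (0 : Fin N → ℝ) δ)
      rw [← h5]
      congr 1
      rw [Metric.vadd_ball]
      simp
    simp_rw [hball] at hle
    rw [ENNReal.tsum_const_eq_top_of_ne_zero
      (Metric.measure_ball_pos MeasureTheory.volume 0 hδpos).ne'] at hle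
    exact top_le_iff.mp hle
  -- Minkowski: a nonzero integer point in the slab
  obtain ⟨a, ha0, has, haZ⟩ := aux_minkowski s h_symm h_conv hvol
  choose A hA using aux_int_coords haZ
  obtain ⟨i0, hi0⟩ : ∃ i0, a i0 ≠ 0 := by
    by_contra h
    push_neg at h
    exact ha0 (funext h)
  -- the functional
  set φ : (Fin N → ℝ) →ₗ[ℝ] ℝ := ∑ i, a i • (LinearMap.proj i) with hφdef
  have hφ : ∀ x, φ x = ∑ i, a i * x i := by
    intro x
    simp [hφdef, LinearMap.sum_apply]
  have hsingle : ∀ i : Fin N, φ (Pi.single i 1) = a i := by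
    intro i
    rw [hφ]
    simp [Pi.single_apply, mul_ite, Finset.sum_ite_eq]
  refine ⟨LinearMap.ker φ, ?_, ?_, ?_⟩
  · exact aux_ker_rational a A hA i0 hi0 φ hφ
  · have hsurj : Function.Surjective φ := by
      intro r
      refine ⟨(r / a i0) • (Pi.single i0 1 : Fin N → ℝ), ?_⟩
      rw [map_smul, hsingle, smul_eq_mul]
      field_simp
    have h1 := LinearMap.finrank_range_add_finrank_ker φ
    rw [LinearMap.range_eq_top.mpr hsurj, finrank_top, Module.finrank_self,
      Module.finrank_pi] at h1
    simp at h1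
    omega
  · refine ⟨(1 / (2 * a i0)) • (Pi.single i0 1 : Fin N → ℝ), ?_⟩
    have hb : φ ((1 / (2 * a i0)) • (Pi.single i0 1 : Fin N → ℝ)) = 1/2 := by
      rw [map_smul, hsingle, smul_eq_mul]
      field_simp
    set b : Fin N → ℝ := (1 / (2 * a i0)) • (Pi.single i0 1 : Fin N → ℝ)
    rw [Set.eq_empty_iff_forall_notMem]
    rintro z ⟨⟨x, hxK, rfl⟩, ⟨-, ⟨q, hq, rfl⟩, hy⟩⟩
    rw [QuotientAddGroup.mk'_eq_mk'] at hy
    obtain ⟨m, hm, hqm⟩ := hy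
    have hmint : ∀ i, ∃ z : ℤ, (z : ℝ) = m i := by
      intro i
      have h1 : m i ∈ AddSubgroup.zmultiples (1:ℝ) := hm i (Set.mem_univ i)
      rw [AddSubgroup.mem_zmultiples_iff] at h1
      obtain ⟨kk, hkk⟩ := h1
      exact ⟨kk, by simpa using hkk⟩
    choose M hM using hmint
    have hφm : φ m = ((∑ i, A i * M i : ℤ) : ℝ) := by
      rw [hφ]
      push_cast
      apply Finset.sum_congr rfl
      intro i _
      rw [hA, hM]
    have hφx : φ x = 1/2 + ((∑ i, A i * M i : ℤ) : ℝ) := by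
      rw [← hqm, map_add, map_add, hb, hφm, LinearMap.mem_ker.mp hq]
      ring
    have hlt : |φ x| < 1/2 := by rw [hφ]; exact has x hxK
    rw [hφx] at hlt
    obtain ⟨h1, h2⟩ := abs_lt.mp hlt
    set zz : ℤ := ∑ i, A i * M i
    have hz1 : (-1 : ℝ) < (zz : ℝ) := by linarith
    have hz2 : (zz : ℝ) < 0 := by linarith
    have hz3 : (-1 : ℤ) < zz := by exact_mod_cast hz1
    have hz4 : zz < 0 := by exact_mod_cast hz2
    omega

end
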